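/- The hyperspace 𝒦([0,1]) of the unit interval, i.e., the set of all nonempty compact subsets of [0,1] equipped with the Hausdorff metric, has infinite Hausdorff dimension and infinite packing dimension: dim_H(𝒦([0,1])) = dim_P(𝒦([0,1])) = ∞. -/

import Mathlib

open Metric Filter Topology TopologicalSpace Set Asymptotics
open scoped ENNReal

noncomputable section

/-- A gauge function: continuous, nondecreasing on `[0,∞)`, vanishing only at 0. -/
def IsGaugeFunction (ψ : ℝ → ℝ) : Prop :=
  ContinuousOn ψ (Ici 0) ∧ MonotoneOn ψ (Ici 0) ∧ (∀ δ : ℝ, 0 ≤ δ → 0 ≤ ψ δ) ∧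
    ψ 0 = 0 ∧ ∀ δ : ℝ, 0 < δ → 0 < ψ δ

/-- A gauge family: `φ s` is a gauge function for each `s ∈ (0,∞)`, and
`φ s = o(φ t)` as `δ → 0⁺` whenever `s > t`. -/
def IsGaugeFamily (φ : ℝ → ℝ → ℝ) : Prop :=
  (∀ s : ℝ, 0 < s → IsGaugeFunction (φ s)) ∧
  ∀ s t : ℝ, 0 < t → t < s → (φ s) =o[𝓝[>] (0:ℝ)] (φ t)

/-- The jump `φ̃` of a gauge family: `φ̃ s δ = 2^(-1/φ s δ)` for `δ > 0`, and `0` at `0`. -/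
def jumpGauge (φ : ℝ → ℝ → ℝ) : ℝ → ℝ → ℝ :=
  fun s δ => if 0 < δ then (2 : ℝ) ^ (-1 / φ s δ) else 0

/-- Covering number: minimum cardinality of a finite set `F ⊆ X` whose `δ`-balls cover `E`
(`∞` if there is none). -/
def coverNum {X : Type*} [MetricSpace X] (E : Set X) (δ : ℝ) : ℕ∞ :=
  sInf ((fun F : Finset X => (F.card : ℕ∞)) '' {F : Finset X | E ⊆ ⋃ x ∈ F, ball x δ})

/-- Covering number with centers restricted to lie in `D`. -/
def coverNumIn {X : Type*} [MetricSpace X] (D E : Set X) (δ : ℝ) : ℕ∞ :=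
  sInf ((fun F : Finset X => (F.card : ℕ∞)) ''
    {F : Finset X | ↑F ⊆ D ∧ E ⊆ ⋃ x ∈ F, ball x δ})

/-- `φ`-gauged lower Minkowski dimension. -/
def lowerMinkDim {X : Type*} [MetricSpace X] (φ : ℝ → ℝ → ℝ) (E : Set X) : ℝ≥0∞ :=
  ⨅ s ∈ {s : ℝ | 0 < s ∧
      Filter.liminf (fun δ : ℝ => (coverNum E δ : ℝ≥0∞) * ENNReal.ofReal (φ s δ))
        (𝓝[>] (0:ℝ)) = 0},
    ENNReal.ofReal s

/-- `φ`-gauged upper Minkowski dimension. -/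
def upperMinkDim {X : Type*} [MetricSpace X] (φ : ℝ → ℝ → ℝ) (E : Set X) : ℝ≥0∞ :=
  ⨅ s ∈ {s : ℝ | 0 < s ∧
      Filter.limsup (fun δ : ℝ => (coverNum E δ : ℝ≥0∞) * ENNReal.ofReal (φ s δ))
        (𝓝[>] (0:ℝ)) = 0},
    ENNReal.ofReal s

/-- The packing pre-measure quantity `P^ψ_δ(E)`: supremum over countable collections of
pairwise disjoint open balls with centers in `E` and diameters at most `δ` of
`Σ ψ(diam U)`.  (Radius-`0` indices give empty balls, allowing finite collections.) -/
def packingPreDelta {X : Type*} [MetricSpace X] (ψ : ℝ → ℝ) (E : Set X) (δ : ℝ) : ℝ≥0∞ :=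
  ⨆ (c : ℕ → X) (r : ℕ → ℝ) (_ : ∀ i, 0 < r i → c i ∈ E)
    (_ : ∀ i, Metric.diam (ball (c i) (r i)) ≤ δ)
    (_ : Pairwise fun i j => Disjoint (ball (c i) (r i)) (ball (c j) (r j))),
    ∑' i, ENNReal.ofReal (ψ (Metric.diam (ball (c i) (r i))))

/-- The `ψ`-gauged packing pre-measure `P^ψ_0(E) = lim_{δ→0⁺} P^ψ_δ(E)`. -/
def packingPre {X : Type*} [MetricSpace X] (ψ : ℝ → ℝ) (E : Set X) : ℝ≥0∞ :=
  ⨅ (δ : ℝ) (_ : 0 < δ), packingPreDelta ψ E δ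

/-- The `ψ`-gauged packing measure. -/
def packingMeas {X : Type*} [MetricSpace X] (ψ : ℝ → ℝ) (E : Set X) : ℝ≥0∞ :=
  ⨅ (U : ℕ → Set X) (_ : E ⊆ ⋃ i, U i), ∑' i, packingPre ψ (U i)

/-- The `φ`-gauged packing dimension. -/
def packingDim {X : Type*} [MetricSpace X] (φ : ℝ → ℝ → ℝ) (E : Set X) : ℝ≥0∞ :=
  ⨅ s ∈ {s : ℝ | 0 < s ∧ packingMeas (φ s) E = 0}, ENNReal.ofReal s

/-- A precision family for a gauge family `φ`. -/
def IsPrecisionFamily (φ : ℝ → ℝ → ℝ) (α : ℝ → ℕ → ℚ) : Prop :=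
  (∀ s : ℝ, 0 < s →
    (∀ r : ℕ, 0 < α s r) ∧
    Filter.Tendsto (fun r : ℕ => ((α s r : ℝ))) Filter.atTop (𝓝 0) ∧
    (fun r : ℕ => φ s ((α s r : ℝ))) =O[Filter.atTop] (fun r : ℕ => φ s ((α s (r+1) : ℝ)))) ∧
  ∀ s t : ℝ, 0 < s → s < t → Summable (fun r : ℕ => φ t ((α s r : ℝ)) / φ s ((α s r : ℝ)))

/-- The hyperspace copy `𝒦(E)` of a set `E ⊆ X`: the set of nonempty compact subsets of `X`
contained in `E`, viewed as a subset of the hyperspace `𝒦(X)` of nonempty compact subsets of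
`X` with the Hausdorff metric. -/
def hyperK {X : Type*} [MetricSpace X] (E : Set X) : Set (NonemptyCompacts X) :=
  {K : NonemptyCompacts X | (K : Set X) ⊆ E}

namespace HyperProof

open MeasureTheory

variable {Y : Type*} [MetricSpace Y]

theorem packingPreDelta_mono_set {ψ : ℝ → ℝ} {E E' : Set Y} (h : E ⊆ E') (δ : ℝ) :
    packingPreDelta ψ E δ ≤ packingPreDelta ψ E' δ := by
  refine iSup_le fun c => iSup_le fun r => iSup_le fun h1 => iSup_le fun h2 =>
    iSup_le fun h3 => ?_
  exact le_iSup_of_le c <| le_iSup_of_le r <| le_iSup_of_le (fun i hi => h (h1 i hi)) <|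
    le_iSup_of_le h2 <| le_iSup_of_le h3 le_rfl

theorem packingPreDelta_mono_delta {ψ : ℝ → ℝ} {E : Set Y} {δ δ' : ℝ} (h : δ ≤ δ') :
    packingPreDelta ψ E δ ≤ packingPreDelta ψ E δ' := by
  refine iSup_le fun c => iSup_le fun r => iSup_le fun h1 => iSup_le fun h2 =>
    iSup_le fun h3 => ?_
  exact le_iSup_of_le c <| le_iSup_of_le r <| le_iSup_of_le h1 <|
    le_iSup_of_le (fun i => (h2 i).trans h) <| le_iSup_of_le h3 le_rfl

theorem packingPre_mono_set {ψ : ℝ → ℝ} {E E' : Set Y} (h : E ⊆ E') :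
    packingPre ψ E ≤ packingPre ψ E' :=
  iInf_mono fun δ => iInf_mono fun _ => packingPreDelta_mono_set h δ

theorem exists_net [CompactSpace Y] (F : Set Y) {δ : ℝ} (hδ : 0 < δ) :
    ∃ T : Finset Y, ↑T ⊆ F ∧ (∀ x ∈ T, ∀ y ∈ T, x ≠ y → δ / 2 ≤ dist x y) ∧
      F ⊆ ⋃ x ∈ T, ball x (δ / 2) := by
  classical
  obtain ⟨t, htfin, htcov⟩ :=
    Metric.totallyBounded_iff.1 (isCompact_univ : IsCompact (univ : Set Y)).totallyBounded (δ / 5) (by linarith)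
  have hnet : ∀ z : Y, ∃ y, y ∈ t ∧ z ∈ ball y (δ / 5) := by
    intro z
    have := htcov (mem_univ z)
    simpa using this
  choose g hg1 hg2 using hnet
  set P : Set ℕ := {m | ∃ T : Finset Y, (↑T ⊆ F ∧ ∀ x ∈ T, ∀ y ∈ T, x ≠ y → δ / 2 ≤ dist x y)
      ∧ T.card = m} with hP
  have hbound : ∀ T : Finset Y, (∀ x ∈ T, ∀ y ∈ T, x ≠ y → δ / 2 ≤ dist x y) →
      T.card ≤ htfin.toFinset.card := by
    intro T hsep
    refine Finset.card_le_card_of_injOn g (fun x _ => htfin.mem_toFinset.2 (hg1 x)) ?_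
    intro a ha b hb hab
    by_contra hne
    have h1 : dist a (g a) < δ / 5 := mem_ball.1 (hg2 a)
    have h2 : dist b (g b) < δ / 5 := mem_ball.1 (hg2 b)
    have h3 : dist a b ≤ dist a (g a) + dist (g b) b := by
      rw [hab]; exact dist_triangle a (g b) b
    rw [dist_comm (g b) b] at h3
    have h4 := hsep a ha b hb hne
    linarith
  have h0 : 0 ∈ P := ⟨∅, ⟨by simp, by simp⟩, by simp⟩
  have hbdd : BddAbove P := ⟨htfin.toFinset.card, fun m hm => by
    obtain ⟨T, hT, hc⟩ := hm; exact hc ▸ hbound T hT.2⟩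
  obtain ⟨T, hT, hc⟩ := Nat.sSup_mem ⟨0, h0⟩ hbdd
  refine ⟨T, hT.1, hT.2, ?_⟩
  intro z hz
  by_contra hzc
  have hz' : ∀ x ∈ T, ¬ z ∈ ball x (δ / 2) := by simpa using hzc
  have hzT : z ∉ T := fun h => hz' z h (mem_ball_self (by linarith))
  have hsep' : ∀ x ∈ insert z T, ∀ y ∈ insert z T, x ≠ y → δ / 2 ≤ dist x y := by
    intro x hx y hy hxy
    have key : ∀ a ∈ T, δ / 2 ≤ dist z a := fun a ha => by
      have := hz' a ha; rw [mem_ball, not_lt] at this; exact this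
    rcases Finset.mem_insert.1 hx with hxz | hxT
    · rcases Finset.mem_insert.1 hy with hyz | hyT
      · exact absurd (hxz.trans hyz.symm) hxy
      · rw [hxz]; exact key y hyT
    · rcases Finset.mem_insert.1 hy with hyz | hyT
      · rw [hyz, dist_comm]; exact key x hxT
      · exact hT.2 x hxT y hyT hxy
  have hmem : T.card + 1 ∈ P := by
    refine ⟨insert z T, ⟨?_, hsep'⟩, Finset.card_insert_of_notMem hzT⟩
    rw [Finset.coe_insert]
    exact Set.insert_subset hz hT.1
  have hle := le_csSup hbdd hmem
  omega

theorem step [CompactSpace Y] [Nonempty Y] {s ε : ℝ} (hs : 0 < s) {C F : Set Y}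
    (hdiam : ∀ c ∈ C, ∀ r : ℝ, 0 < r → r ≤ ε / 2 → r ≤ Metric.diam (ball c r))
    (hF : F ⊆ C) {δ : ℝ} (hδ : 0 < δ) (hδε : δ ≤ ε) :
    ∃ t : ℕ → Set Y, (F ⊆ ⋃ i, t i) ∧ (∀ i, EMetric.diam (t i) ≤ ENNReal.ofReal δ) ∧
      ∑' i, EMetric.diam (t i) ^ s ≤
        ENNReal.ofReal ((4:ℝ) ^ s) * packingPreDelta (fun u : ℝ => u ^ s) F δ := by
  classical
  obtain ⟨T, hTF, hTsep, hTcov⟩ := exists_net F hδ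
  set L := T.toList with hL
  set k := L.length with hk
  set c : ℕ → Y := fun i => L.getD i (Classical.arbitrary Y) with hc
  have hcval : ∀ i (hi : i < k), c i = L.get ⟨i, hi⟩ := by
    intro i hi
    simp only [hc, List.getD_eq_getElem?_getD, List.getElem?_eq_getElem hi]
    rfl
  have hcT : ∀ i, i < k → c i ∈ T := by
    intro i hi
    rw [hcval i hi, ← Finset.mem_toList]
    exact List.get_mem _ _
  set r' : ℕ → ℝ := fun i => if i < k then δ / 4 else 0 with hr'
  have hr'nonneg : ∀ i, 0 ≤ r' i := by
    intro i; by_cases h : i < k <;> simp [hr', h] <;> linarith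
  have h1 : ∀ i, 0 < r' i → c i ∈ F := by
    intro i hi
    have hik : i < k := by by_contra h; simp [hr', h] at hi
    exact hTF (hcT i hik)
  have h2 : ∀ i, Metric.diam (ball (c i) (r' i)) ≤ δ := by
    intro i
    refine (Metric.diam_ball (hr'nonneg i)).trans ?_
    by_cases h : i < k <;> simp [hr', h] <;> linarith
  have h3 : Pairwise fun i j => Disjoint (ball (c i) (r' i)) (ball (c j) (r' j)) := by
    intro i j hij
    by_cases hik : i < k
    · by_cases hjk : j < k
      · have hne : c i ≠ c j := by
          rw [hcval i hik, hcval j hjk]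
          intro h
          have h' := (List.Nodup.get_inj_iff (Finset.nodup_toList T)).1 h
          exact hij (by simpa using congrArg Fin.val h')
        have hsep := hTsep (c i) (hcT i hik) (c j) (hcT j hjk) hne
        refine ball_disjoint_ball ?_
        simp only [hr', if_pos hik, if_pos hjk]
        linarith
      · simp only [hr', if_neg hjk, ball_zero]
        exact Set.disjoint_empty _
    · simp only [hr', if_neg hik, ball_zero]
      exact Set.empty_disjoint _
  have hpack : ∑' i, ENNReal.ofReal ((Metric.diam (ball (c i) (r' i))) ^ s) ≤
      packingPreDelta (fun u : ℝ => u ^ s) F δ :=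
    le_iSup_of_le c <| le_iSup_of_le r' <| le_iSup_of_le h1 <| le_iSup_of_le h2 <|
      le_iSup_of_le h3 le_rfl
  have hterm : ∀ i, i < k → ENNReal.ofReal ((δ / 4) ^ s) ≤
      ENNReal.ofReal ((Metric.diam (ball (c i) (r' i))) ^ s) := by
    intro i hik
    have hdi : δ / 4 ≤ Metric.diam (ball (c i) (δ / 4)) := by
      have hε : 0 < ε := lt_of_lt_of_le hδ hδε
      exact hdiam (c i) (hF (hTF (hcT i hik))) (δ / 4) (by linarith) (by linarith)
    apply ENNReal.ofReal_le_ofReal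
    have := Real.rpow_le_rpow (by linarith) hdi hs.le
    simpa [hr', hik] using this
  have hdball : ∀ i, i < k → EMetric.diam (ball (c i) (δ / 2)) ≤ ENNReal.ofReal δ := by
    intro i _
    calc EMetric.diam (ball (c i) (δ / 2))
        = EMetric.diam (Metric.eball (c i) (ENNReal.ofReal (δ / 2))) := by
          rw [Metric.emetric_ball]
      _ ≤ 2 * ENNReal.ofReal (δ / 2) := EMetric.diam_ball
      _ = ENNReal.ofReal δ := by
          rw [show (2 : ℝ≥0∞) = ENNReal.ofReal 2 from (ENNReal.ofReal_ofNat 2).symm,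
            ← ENNReal.ofReal_mul (by norm_num)]
          congr 1
          ring
  refine ⟨fun i => if i < k then ball (c i) (δ / 2) else ∅, ?_, ?_, ?_⟩
  · intro z hz
    have := hTcov hz
    simp only [Set.mem_iUnion] at this
    obtain ⟨x, hxT, hxz⟩ := this
    obtain ⟨⟨i, hik⟩, rfl⟩ := List.mem_iff_get.1 (Finset.mem_toList.2 hxT)
    refine Set.mem_iUnion.2 ⟨i, ?_⟩
    rw [if_pos hik, hcval i hik]
    exact hxz
  · intro i
    dsimp only
    by_cases h : i < k
    · rw [if_pos h]; exact hdball i h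
    · rw [if_neg h]; simp [EMetric.diam]
  · dsimp only
    have hzero : ∀ i ∉ Finset.range k,
        EMetric.diam (if i < k then ball (c i) (δ / 2) else ∅) ^ s = 0 := by
      intro i hi
      rw [Finset.mem_range] at hi
      rw [if_neg hi]
      simp [EMetric.diam, ENNReal.zero_rpow_of_pos hs]
    rw [tsum_eq_sum hzero]
    have hub : ∀ i ∈ Finset.range k,
        EMetric.diam (if i < k then ball (c i) (δ / 2) else ∅) ^ s ≤
        ENNReal.ofReal ((4:ℝ) ^ s) * ENNReal.ofReal ((δ / 4) ^ s) := by
      intro i hi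
      rw [Finset.mem_range] at hi
      rw [if_pos hi]
      calc EMetric.diam (ball (c i) (δ / 2)) ^ s
          ≤ (ENNReal.ofReal δ) ^ s := ENNReal.rpow_le_rpow (hdball i hi) hs.le
        _ = ENNReal.ofReal (δ ^ s) := ENNReal.ofReal_rpow_of_pos hδ
        _ = ENNReal.ofReal ((4:ℝ) ^ s * (δ / 4) ^ s) := by
            rw [← Real.mul_rpow (by norm_num) (by linarith), show (4:ℝ) * (δ / 4) = δ by ring]
        _ = _ := ENNReal.ofReal_mul (by positivity)
    calc ∑ i ∈ Finset.range k, EMetric.diam (if i < k then ball (c i) (δ / 2) else ∅) ^ s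
        ≤ ∑ _i ∈ Finset.range k, ENNReal.ofReal ((4:ℝ) ^ s) * ENNReal.ofReal ((δ / 4) ^ s) :=
          Finset.sum_le_sum hub
      _ = ENNReal.ofReal ((4:ℝ) ^ s) * ∑ _i ∈ Finset.range k, ENNReal.ofReal ((δ / 4) ^ s) := by
          rw [Finset.mul_sum]
      _ ≤ ENNReal.ofReal ((4:ℝ) ^ s) *
          ∑' i, ENNReal.ofReal ((Metric.diam (ball (c i) (r' i))) ^ s) := by
          refine mul_le_mul_right ?_ _
          refine le_trans (Finset.sum_le_sum fun i hi => hterm i (Finset.mem_range.1 hi)) ?_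
          exact ENNReal.sum_le_tsum _
      _ ≤ _ := mul_le_mul_right hpack _
theorem muH_le [CompactSpace Y] [Nonempty Y] [MeasurableSpace Y] [BorelSpace Y]
    {s ε : ℝ} (hs : 0 < s) (hε : 0 < ε) {C F : Set Y}
    (hdiam : ∀ c ∈ C, ∀ r : ℝ, 0 < r → r ≤ ε / 2 → r ≤ Metric.diam (ball c r))
    (hF : F ⊆ C) :
    μH[s] F ≤ ENNReal.ofReal ((4:ℝ) ^ s) * packingPre (fun u : ℝ => u ^ s) F := by
  have hδ : ∀ m : ℕ, 0 < ε / (m + 1) := fun m => by positivity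
  have hδε : ∀ m : ℕ, ε / (m + 1) ≤ ε := by
    intro m
    rw [div_le_iff₀ (by positivity)]
    nlinarith [Nat.cast_nonneg (α := ℝ) m]
  choose t hcov hdm hsum using fun m : ℕ => step hs hdiam hF (hδ m) (hδε m)
  have hreal : Tendsto (fun m : ℕ => ε / (m + 1)) atTop (𝓝 0) := by
    have h1 : Tendsto (fun m : ℕ => ε * (1 / (m + 1))) atTop (𝓝 (ε * 0)) :=
      tendsto_one_div_add_atTop_nhds_zero_nat.const_mul ε
    simpa [div_eq_mul_inv, one_div] using h1
  have hr0 : Tendsto (fun m : ℕ => ENNReal.ofReal (ε / (m + 1))) atTop (𝓝 0) := by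
    rw [← ENNReal.ofReal_zero]
    exact ENNReal.tendsto_ofReal hreal
  have hμ := MeasureTheory.Measure.hausdorffMeasure_le_liminf_tsum (X := Y) s F
      (fun m : ℕ => ENNReal.ofReal (ε / (m + 1))) hr0 t
      (Filter.Eventually.of_forall hdm) (Filter.Eventually.of_forall hcov)
  refine hμ.trans ?_
  set Cst := ENNReal.ofReal ((4:ℝ) ^ s) with hCst
  have hC0 : Cst ≠ 0 := by
    rw [hCst, Ne, ENNReal.ofReal_eq_zero, not_le]
    positivity
  have hCt : Cst ≠ ⊤ := ENNReal.ofReal_ne_top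
  have hdiv : Filter.liminf (fun m : ℕ => ∑' i, EMetric.diam (t m i) ^ s) atTop / Cst ≤
      packingPre (fun u : ℝ => u ^ s) F := by
    refine le_iInf fun δ => le_iInf fun hδpos => ?_
    rw [ENNReal.div_le_iff hC0 hCt, mul_comm]
    refine Filter.liminf_le_of_frequently_le' ?_
    have hev : ∀ᶠ m : ℕ in atTop, ε / (m + 1) < δ :=
      hreal.eventually_lt_const hδpos
    refine (hev.mono fun m hm => ?_).frequently
    refine (hsum m).trans ?_
    exact mul_le_mul_right (packingPreDelta_mono_delta hm.le) _
  calc Filter.liminf (fun m : ℕ => ∑' i, EMetric.diam (t m i) ^ s) atTop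
      = Filter.liminf (fun m : ℕ => ∑' i, EMetric.diam (t m i) ^ s) atTop / Cst * Cst := by
        rw [ENNReal.div_mul_cancel hC0 hCt]
    _ ≤ packingPre (fun u : ℝ => u ^ s) F * Cst := mul_le_mul_left hdiv _
    _ = Cst * packingPre (fun u : ℝ => u ^ s) F := mul_comm _ _
def epsn (m : ℕ) : ℝ := 1 / (3 * (m + 1))

lemma epsn_pos (m : ℕ) : 0 < epsn m := by
  have : (0:ℝ) < (m:ℝ) + 1 := by positivity
  rw [epsn]; positivity

def cubePt (m : ℕ) (x : Fin (m+1) → ↥(Icc (0:ℝ) (epsn m))) (k : Fin (m+1)) :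
    ↥(Icc (0:ℝ) 1) :=
  Set.projIcc 0 1 zero_le_one ((k : ℝ) / (m + 1) + (x k : ℝ))

lemma cubePt_mem (m : ℕ) (x : Fin (m+1) → ↥(Icc (0:ℝ) (epsn m))) (k : Fin (m+1)) :
    (k : ℝ) / (m + 1) + (x k : ℝ) ∈ Icc (0:ℝ) 1 := by
  have hx := (x k).2
  rw [mem_Icc] at hx
  have hm : (0:ℝ) < (m:ℝ) + 1 := by positivity
  have hk1 : (k:ℝ) ≤ (m:ℝ) := by
    have := Nat.lt_succ_iff.1 k.isLt
    exact_mod_cast this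
  constructor
  · have : 0 ≤ (k:ℝ) / (m + 1) := by positivity
    linarith
  · have he : epsn m ≤ 1 / ((m:ℝ) + 1) := by
      rw [epsn]
      apply one_div_le_one_div_of_le hm
      nlinarith
    calc (k:ℝ) / (m + 1) + (x k : ℝ) ≤ (m:ℝ) / (m + 1) + 1 / ((m:ℝ) + 1) := by
          have h1 : (k:ℝ) / (m + 1) ≤ (m:ℝ) / (m + 1) := by gcongr
          linarith
      _ = ((m:ℝ) + 1) / ((m:ℝ) + 1) := by rw [← add_div]
      _ = 1 := div_self hm.ne'

lemma cubePt_coe (m : ℕ) (x : Fin (m+1) → ↥(Icc (0:ℝ) (epsn m))) (k : Fin (m+1)) :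
    (cubePt m x k : ℝ) = (k : ℝ) / (m + 1) + (x k : ℝ) := by
  rw [cubePt, Set.projIcc_of_mem zero_le_one (cubePt_mem m x k)]

def cubeEmb (m : ℕ) (x : Fin (m+1) → ↥(Icc (0:ℝ) (epsn m))) :
    NonemptyCompacts ↥(Icc (0:ℝ) 1) :=
  ⟨⟨Set.range (cubePt m x), (Set.finite_range _).isCompact⟩, Set.range_nonempty _⟩

lemma cubeEmb_coe (m : ℕ) (x : Fin (m+1) → ↥(Icc (0:ℝ) (epsn m))) :
    (cubeEmb m x : Set ↥(Icc (0:ℝ) 1)) = Set.range (cubePt m x) := rfl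

lemma dist_cubePt_same (m : ℕ) (x y : Fin (m+1) → ↥(Icc (0:ℝ) (epsn m))) (k : Fin (m+1)) :
    dist (cubePt m x k) (cubePt m y k) = dist (x k) (y k) := by
  rw [Subtype.dist_eq, Subtype.dist_eq, cubePt_coe, cubePt_coe, Real.dist_eq, Real.dist_eq]
  congr 1
  ring

lemma dist_coord_le (m : ℕ) (x y : Fin (m+1) → ↥(Icc (0:ℝ) (epsn m))) (k j : Fin (m+1)) :
    dist (x k) (y j) ≤ epsn m := by
  rw [Subtype.dist_eq, Real.dist_eq]
  have hx := (x k).2; have hy := (y j).2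
  rw [mem_Icc] at hx hy
  rw [abs_le]
  constructor <;> linarith

lemma dist_cubePt_ne (m : ℕ) (x y : Fin (m+1) → ↥(Icc (0:ℝ) (epsn m))) {k j : Fin (m+1)}
    (h : k ≠ j) : 2 * epsn m ≤ dist (cubePt m x k) (cubePt m y j) := by
  rw [Subtype.dist_eq, cubePt_coe, cubePt_coe, Real.dist_eq]
  have hx := (x k).2; have hy := (y j).2
  rw [mem_Icc] at hx hy
  have hm : (0:ℝ) < (m:ℝ) + 1 := by positivity
  have h1 : 1 ≤ |(k:ℝ) - (j:ℝ)| := by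
    have hne : ((k:ℕ):ℤ) - ((j:ℕ):ℤ) ≠ 0 := by
      intro hh
      exact h (Fin.ext (by omega))
    have h2 := Int.one_le_abs hne
    have h3 : ((1:ℤ):ℝ) ≤ ((|((k:ℕ):ℤ) - ((j:ℕ):ℤ)| : ℤ) : ℝ) := by exact_mod_cast h2
    rw [Int.cast_abs] at h3
    push_cast at h3 ⊢
    exact h3
  have hB : |(x k : ℝ) - (y j : ℝ)| ≤ epsn m := by
    rw [abs_le]; constructor <;> linarith
  have h3eps : 3 * epsn m = 1 / ((m:ℝ) + 1) := by
    rw [epsn]; field_simp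
  have hA : 1 / ((m:ℝ) + 1) ≤ |(k:ℝ)/(m+1) - (j:ℝ)/(m+1)| := by
    rw [div_sub_div_same, abs_div, abs_of_pos hm]
    gcongr
  have htri : |(k:ℝ)/(m+1) - (j:ℝ)/(m+1)| ≤
      |((k:ℝ)/(m+1) + (x k:ℝ)) - ((j:ℝ)/(m+1) + (y j:ℝ))| + |(x k : ℝ) - (y j : ℝ)| := by
    calc |(k:ℝ)/(m+1) - (j:ℝ)/(m+1)|
        = |(((k:ℝ)/(m+1) + (x k:ℝ)) - ((j:ℝ)/(m+1) + (y j:ℝ))) + ((y j:ℝ) - (x k:ℝ))| := by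
          congr 1; ring
      _ ≤ |((k:ℝ)/(m+1) + (x k:ℝ)) - ((j:ℝ)/(m+1) + (y j:ℝ))| + |(y j:ℝ) - (x k:ℝ)| :=
          abs_add_le _ _
      _ = |((k:ℝ)/(m+1) + (x k:ℝ)) - ((j:ℝ)/(m+1) + (y j:ℝ))| + |(x k:ℝ) - (y j:ℝ)| := by
          rw [abs_sub_comm ((y j:ℝ)) ((x k:ℝ))]
  linarith
lemma isometry_cubeEmb (m : ℕ) : Isometry (cubeEmb m) := by
  refine Isometry.of_dist_eq fun x y => ?_
  rw [NonemptyCompacts.dist_eq]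
  change hausdorffDist (Set.range (cubePt m x)) (Set.range (cubePt m y)) = _
  have hedist : EMetric.hausdorffEdist (Set.range (cubePt m x)) (Set.range (cubePt m y)) ≠ ⊤ :=
    hausdorffEdist_ne_top_of_nonempty_of_bounded (Set.range_nonempty _) (Set.range_nonempty _)
      isBounded_of_compactSpace isBounded_of_compactSpace
  apply le_antisymm
  · refine hausdorffDist_le_of_mem_dist dist_nonneg ?_ ?_
    · rintro p ⟨k, rfl⟩
      exact ⟨cubePt m y k, Set.mem_range_self k, by
        rw [dist_cubePt_same]; exact dist_le_pi_dist x y k⟩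
    · rintro p ⟨k, rfl⟩
      refine ⟨cubePt m x k, Set.mem_range_self k, ?_⟩
      rw [dist_comm, dist_cubePt_same]
      exact dist_le_pi_dist x y k
  · obtain ⟨k0, -, hk0⟩ := Finset.exists_mem_eq_sup (Finset.univ : Finset (Fin (m+1)))
      Finset.univ_nonempty (fun k => nndist (x k) (y k))
    have hdxy : dist x y = dist (x k0) (y k0) := by
      rw [dist_nndist, dist_nndist, nndist_pi_def, hk0]
    have hinf : dist x y ≤ infDist (cubePt m x k0) (Set.range (cubePt m y)) := by
      haveI : Nonempty ↥(Set.range (cubePt m y)) := (Set.range_nonempty _).to_subtype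
      rw [infDist_eq_iInf]
      refine le_ciInf fun q => ?_
      obtain ⟨j, hj⟩ := q.2
      rw [← hj]
      rcases eq_or_ne k0 j with rfl | hne
      · rw [dist_cubePt_same, hdxy]
      · calc dist x y ≤ epsn m := hdxy ▸ dist_coord_le m x y k0 k0
          _ ≤ 2 * epsn m := by have := epsn_pos m; linarith
          _ ≤ dist (cubePt m x k0) (cubePt m y j) := dist_cubePt_ne m x y hne
    exact hinf.trans (infDist_le_hausdorffDist_of_mem (Set.mem_range_self k0) hedist)

lemma diam_ball_ge (m : ℕ) {c : NonemptyCompacts ↥(Icc (0:ℝ) 1)}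
    (hc : c ∈ Set.range (cubeEmb m)) {r : ℝ} (hr : 0 < r) (hre : r ≤ epsn m / 2) :
    r ≤ Metric.diam (ball c r) := by
  obtain ⟨x, rfl⟩ := hc
  by_contra hlt
  push_neg at hlt
  obtain ⟨t, ht1, ht2⟩ := exists_between hlt
  have ht0 : 0 < t := lt_of_le_of_lt Metric.diam_nonneg ht1
  set k0 : Fin (m+1) := 0 with hk0def
  have hx0 := (x k0).2
  rw [mem_Icc] at hx0
  have hte : t < epsn m / 2 := lt_of_lt_of_le ht2 hre
  obtain ⟨v, hvmem, hvd⟩ : ∃ v : ℝ, v ∈ Icc 0 (epsn m) ∧ |(x k0 : ℝ) - v| = t := by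
    rcases le_or_gt ((x k0 : ℝ)) (epsn m / 2) with h | h
    · refine ⟨(x k0 : ℝ) + t, ⟨by linarith, by linarith⟩, ?_⟩
      rw [show (x k0 : ℝ) - ((x k0 : ℝ) + t) = -t by ring, abs_neg, abs_of_pos ht0]
    · refine ⟨(x k0 : ℝ) - t, ⟨by linarith, by linarith⟩, ?_⟩
      rw [show (x k0 : ℝ) - ((x k0 : ℝ) - t) = t by ring, abs_of_pos ht0]
  set y := Function.update x k0 ⟨v, hvmem⟩ with hy
  have hdk0 : dist (x k0) (y k0) = t := by
    rw [hy, Function.update_self, Subtype.dist_eq, Real.dist_eq]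
    exact hvd
  have hdxy_le : dist x y ≤ t := by
    rw [dist_pi_le_iff ht0.le]
    intro b
    rcases eq_or_ne b k0 with rfl | hb
    · exact le_of_eq hdk0
    · rw [hy, Function.update_of_ne hb]
      simp [ht0.le]
  have hdxy_ge : t ≤ dist x y := hdk0 ▸ dist_le_pi_dist x y k0
  have hmem1 : cubeEmb m x ∈ ball (cubeEmb m x) r := mem_ball_self hr
  have hmem2 : cubeEmb m y ∈ ball (cubeEmb m x) r := by
    rw [mem_ball, (isometry_cubeEmb m).dist_eq]
    calc dist y x = dist x y := dist_comm y x
      _ ≤ t := hdxy_le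
      _ < r := ht2
  have hfinal : t ≤ Metric.diam (ball (cubeEmb m x) r) := by
    calc t ≤ dist x y := hdxy_ge
      _ = dist (cubeEmb m x) (cubeEmb m y) := ((isometry_cubeEmb m).dist_eq x y).symm
      _ ≤ _ := dist_le_diam_of_mem isBounded_of_compactSpace hmem1 hmem2
  linarith

lemma dimH_range_cubeEmb (m : ℕ) : dimH (Set.range (cubeEmb m)) = ((m + 1 : ℕ) : ℝ≥0∞) := by
  rw [← Set.image_univ, Isometry.dimH_image (isometry_cubeEmb m)]
  have hj : Isometry (fun (x : Fin (m+1) → ↥(Icc (0:ℝ) (epsn m))) (k : Fin (m+1)) =>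
      (x k : ℝ)) := by
    refine Isometry.of_dist_eq fun x y => ?_
    rw [dist_nndist, dist_nndist]
    congr 1
  have himg : (fun (x : Fin (m+1) → ↥(Icc (0:ℝ) (epsn m))) (k : Fin (m+1)) => (x k : ℝ)) ''
      Set.univ = Set.univ.pi (fun _ : Fin (m+1) => Icc (0:ℝ) (epsn m)) := by
    ext g
    constructor
    · rintro ⟨x, -, rfl⟩
      intro k _
      exact (x k).2
    · intro hg
      exact ⟨fun k => ⟨g k, hg k (Set.mem_univ k)⟩, Set.mem_univ _, rfl⟩
  rw [← Isometry.dimH_image hj Set.univ, himg]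
  rw [Real.dimH_of_mem_nhds (x := fun _ => epsn m / 2) ?_]
  · simp [Module.finrank_fin_fun]
  · refine set_pi_mem_nhds Set.finite_univ fun k _ => Icc_mem_nhds ?_ ?_
    · have := epsn_pos m; linarith
    · have := epsn_pos m; linarith

end HyperProof

/-- The hyperspace `𝒦([0,1])` of all nonempty compact subsets of the unit interval, with the
Hausdorff metric, has infinite Hausdorff dimension and infinite packing dimension. -/
theorem hyperspace_unit_interval_dim_top :
    dimH (Set.univ : Set (NonemptyCompacts (Icc (0:ℝ) 1))) = ⊤ ∧
    packingDim (fun s δ : ℝ => δ ^ s)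
      (Set.univ : Set (NonemptyCompacts (Icc (0:ℝ) 1))) = ⊤ := by
  constructor
  · by_contra hne
    obtain ⟨n, hn⟩ := ENNReal.exists_nat_gt hne
    have hge : ((n + 1 : ℕ) : ℝ≥0∞) ≤ dimH (Set.univ : Set (NonemptyCompacts (Icc (0:ℝ) 1))) := by
      rw [← HyperProof.dimH_range_cubeEmb n]
      exact dimH_mono (Set.subset_univ _)
    have hcast : ((n : ℕ) : ℝ≥0∞) ≤ ((n + 1 : ℕ) : ℝ≥0∞) := by
      exact_mod_cast Nat.cast_le.2 (Nat.le_succ n)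
    exact hn.not_ge (hcast.trans hge)
  · have hS : {s : ℝ | 0 < s ∧
        packingMeas ((fun s δ : ℝ => δ ^ s) s) (Set.univ : Set (NonemptyCompacts (Icc (0:ℝ) 1)))
          = 0} = ∅ := by
      ext s
      simp only [Set.mem_setOf_eq, Set.mem_empty_iff_false, iff_false, not_and]
      intro hs hmeas
      set m := ⌈s⌉₊ with hm
      borelize (NonemptyCompacts ↥(Icc (0:ℝ) 1))
      haveI : Nonempty (NonemptyCompacts ↥(Icc (0:ℝ) 1)) :=
        ⟨HyperProof.cubeEmb 0 (fun _ => ⟨0, Set.mem_Icc.2 ⟨le_rfl, (HyperProof.epsn_pos 0).le⟩⟩)⟩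
      have h1 : packingMeas (fun δ : ℝ => δ ^ s)
          (Set.univ : Set (NonemptyCompacts (Icc (0:ℝ) 1))) < 1 := by
        rw [hmeas]; exact zero_lt_one
      rw [packingMeas] at h1
      obtain ⟨U, hU⟩ := iInf_lt_iff.1 h1
      obtain ⟨hUcov, hUsum⟩ := iInf_lt_iff.1 hU
      set C : Set (NonemptyCompacts ↥(Icc (0:ℝ) 1)) := Set.range (HyperProof.cubeEmb m) with hC
      have hdiam : ∀ c ∈ C, ∀ r : ℝ, 0 < r → r ≤ HyperProof.epsn m / 2 →
          r ≤ Metric.diam (ball c r) := fun c hc r hr hre => HyperProof.diam_ball_ge m hc hr hre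
      have hμi : ∀ i, MeasureTheory.Measure.hausdorffMeasure s (U i ∩ C) ≤
          ENNReal.ofReal ((4:ℝ) ^ s) * packingPre (fun u : ℝ => u ^ s) (U i) := fun i =>
        (HyperProof.muH_le hs (HyperProof.epsn_pos m) hdiam Set.inter_subset_right).trans
          (mul_le_mul_right (HyperProof.packingPre_mono_set Set.inter_subset_left) _)
      have hCcov : C ⊆ ⋃ i, (U i ∩ C) := by
        intro z hz
        have := hUcov (Set.mem_univ z)
        obtain ⟨i, hi⟩ := Set.mem_iUnion.1 this
        exact Set.mem_iUnion.2 ⟨i, hi, hz⟩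
      have hfin : MeasureTheory.Measure.hausdorffMeasure s C ≤ ENNReal.ofReal ((4:ℝ) ^ s) := by
        refine ((MeasureTheory.measure_mono hCcov).trans (MeasureTheory.measure_iUnion_le _)).trans ?_
        calc ∑' i, MeasureTheory.Measure.hausdorffMeasure s (U i ∩ C)
            ≤ ∑' i, ENNReal.ofReal ((4:ℝ) ^ s) * packingPre (fun u : ℝ => u ^ s) (U i) :=
              ENNReal.tsum_le_tsum hμi
          _ = ENNReal.ofReal ((4:ℝ) ^ s) * ∑' i, packingPre (fun u : ℝ => u ^ s) (U i) :=
              ENNReal.tsum_mul_left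
          _ ≤ ENNReal.ofReal ((4:ℝ) ^ s) * 1 := mul_le_mul_right hUsum.le _
          _ = _ := mul_one _
      have htop : MeasureTheory.Measure.hausdorffMeasure s C = ⊤ := by
        have hdim : ((s.toNNReal : ℝ≥0∞)) < dimH C := by
          rw [hC, HyperProof.dimH_range_cubeEmb m]
          have h2 : (s.toNNReal : ℝ≥0∞) = ENNReal.ofReal s := rfl
          rw [h2, ← ENNReal.ofReal_natCast (m + 1)]
          refine (ENNReal.ofReal_lt_ofReal_iff (by positivity)).2 ?_
          have := Nat.le_ceil s
          push_cast
          rw [hm] at *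
          linarith
        have h3 := hausdorffMeasure_of_lt_dimH hdim
        rw [Real.coe_toNNReal s hs.le] at h3
        exact h3
      rw [htop] at hfin
      exact ENNReal.ofReal_ne_top (top_le_iff.1 hfin)
    simp only [packingDim]
    rw [hS]
    simp

end
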